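/- Let R and B be disjoint finite sets of red and blue points in the plane with R ∪ B in general position, |B| ≥ 1, and |R| = k'|B| + 1 for an integer k' ≥ 2; set k = k' + 1. Suppose b₁, b, b₂ are blue points that are consecutive in counter-clockwise order among the vertices of the convex hull of R ∪ B. Then there exist points r₁, r_k ∈ R such that: (i) the points of (R ∪ B) − {b} lying in the closed angular wedge with apex b bounded by the ray from b through r₁ and the ray from b through r_k (with r₁ preceding r_k in the clockwise radial order around b starting at b₁) are exactly k points, all of them red; (ii) |R₁| = k'|B₁| + 1, where R₁ (resp. B₁) is the set of points of R (resp. B − {b}) lying on the line ℓ(b, r₁) or strictly on the side of ℓ(b, r₁) containing b₁; and (iii) |R₂| = k'|B₂| + 1, where R₂ (resp. B₂) is the set of points of R (resp. B − {b}) lying on the line ℓ(b, r_k) or strictly on the side of ℓ(b, r_k) containing b₂. -/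

import Mathlib

open scoped Classical

noncomputable section

/-- The plane. -/
abbrev Pt : Type := ℝ × ℝ

/-- A set of points is in general position if no three of its points are collinear. -/
def GenPos (P : Set Pt) : Prop :=
  ∀ p ∈ P, ∀ q ∈ P, ∀ r ∈ P, p ≠ q → p ≠ r → q ≠ r →
    ¬ Collinear ℝ ({p, q, r} : Set Pt)

/-- The planar cross product of two vectors. -/
def cross (u v : Pt) : ℝ := u.1 * v.2 - u.2 * v.1

/-- Signed orientation of the triple `(p, q, x)`: positive iff `x` lies strictly to
the left of the directed line from `p` to `q`, zero iff the three points are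
collinear. -/
def sgn3 (p q x : Pt) : ℝ := cross (q - p) (x - p)

/-- `[p, q]` is an edge of the convex hull of `P`, directed so that all of `P` lies
on the left of (or on) the directed line from `p` to `q`; successive such edges list
the hull vertices in counter-clockwise order. -/
def IsCCWHullEdge (P : Set Pt) (p q : Pt) : Prop :=
  p ∈ P ∧ q ∈ P ∧ p ≠ q ∧ ∀ x ∈ P, 0 ≤ sgn3 p q x

lemma cross_comm' (a c : Pt) : cross a c = - cross c a := by simp [cross]; ring

lemma cross_shift' (a c x : Pt) : cross (a - c) (x - c) = - cross (c - a) (x - a) := by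
  simp [cross]; ring

lemma plucker' (u v w z : Pt) :
    cross u w * (cross u z + cross z v) - cross u z * (cross u w + cross w v)
      = - (cross u v * cross w z) := by
  simp [cross]; ring

lemma collinear_of_cross_eq_zero' {p q r : Pt} (h : cross (q - p) (r - p) = 0) :
    Collinear ℝ ({p, q, r} : Set Pt) := by
  rcases eq_or_ne q p with rfl | hqp
  · have : ({q, q, r} : Set Pt) = {q, r} := by simp
    rw [this]; exact collinear_pair ℝ q r
  · apply (collinear_iff_of_mem (Set.mem_insert p {q, r})).2
    refine ⟨q - p, ?_⟩
    intro x hx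
    rcases hx with rfl | rfl | rfl
    · exact ⟨0, by simp⟩
    · exact ⟨1, by simp⟩
    · have h' : (q.1 - p.1) * (x.2 - p.2) - (q.2 - p.2) * (x.1 - p.1) = 0 := by
        simpa [cross] using h
      rcases eq_or_ne (q.1 - p.1) 0 with h1 | h1
      · have h2 : q.2 - p.2 ≠ 0 := by
          intro h2; apply hqp; ext <;> [skip; skip] <;> linarith
        refine ⟨(x.2 - p.2) / (q.2 - p.2), ?_⟩
        have hx1 : x.1 - p.1 = 0 := by
          have := h'; rw [h1] at this; simp at this
          rcases this with h | h
          · exact absurd h h2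
          · exact h
        ext
        · show x.1 = (x.2 - p.2) / (q.2 - p.2) * (q.1 - p.1) + p.1
          rw [h1]; simp; linarith
        · show x.2 = (x.2 - p.2) / (q.2 - p.2) * (q.2 - p.2) + p.2
          field_simp
          ring
      · refine ⟨(x.1 - p.1) / (q.1 - p.1), ?_⟩
        ext
        · show x.1 = (x.1 - p.1) / (q.1 - p.1) * (q.1 - p.1) + p.1
          field_simp
          ring
        · show x.2 = (x.1 - p.1) / (q.1 - p.1) * (q.2 - p.2) + p.2
          field_simp
          nlinarith [h']

lemma mul_nonpos_iff_of_pos_right' {a c : ℝ} (hc : 0 < c) : a * c ≤ 0 ↔ a ≤ 0 := by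
  constructor
  · intro h; nlinarith
  · intro h; exact mul_nonpos_of_nonpos_of_nonneg h hc.le

lemma mul_nonpos_iff_of_neg_right' {a c : ℝ} (hc : c < 0) : a * c ≤ 0 ↔ 0 ≤ a := by
  constructor
  · intro h; nlinarith
  · intro h; exact mul_nonpos_of_nonneg_of_nonpos h hc.le

lemma mul_nonneg_iff_of_pos_right'' {a c : ℝ} (hc : 0 < c) : 0 ≤ a * c ↔ 0 ≤ a := by
  constructor
  · intro h; nlinarith
  · intro h; positivity

lemma mul_nonneg_iff_of_neg_right' {a c : ℝ} (hc : c < 0) : 0 ≤ a * c ↔ a ≤ 0 := by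
  constructor
  · intro h; nlinarith
  · intro h; nlinarith

/-- Lemma on three consecutive blue hull points, `|R| = k'|B| + 1`.
Let `|R| = k'|B| + 1`, `k' ≥ 2`, `|B| ≥ 1`, `k = k' + 1`, and let `b₁, b, b₂` be blue
points consecutive in counter-clockwise order on the convex hull of `R ∪ B`. Then
there are red points `r₁, r_k`, with `r₁` preceding `r_k` in the clockwise radial
order around `b` starting at `b₁`, such that:
(i) the closed angular wedge at `b` between the rays `b→r₁` and `b→r_k` contains
exactly `k` points of `(R ∪ B) \ {b}`, all of them red;
(ii) `|R₁| = k'|B₁| + 1` for the points on `ℓ(b,r₁)` or strictly on its `b₁`-side;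
(iii) `|R₂| = k'|B₂| + 1` for the points on `ℓ(b,r_k)` or strictly on its `b₂`-side. -/
theorem statement_14 (R B : Finset Pt) (hdisj : Disjoint R B)
    (hgp : GenPos (↑(R ∪ B) : Set Pt)) (k' : ℕ) (hk' : 2 ≤ k') (hB : 1 ≤ B.card)
    (hcard : R.card = k' * B.card + 1)
    (k : ℕ) (hkk : k = k' + 1)
    (b₁ b b₂ : Pt) (hb₁ : b₁ ∈ B) (hb : b ∈ B) (hb₂ : b₂ ∈ B)
    (hedge₁ : IsCCWHullEdge (↑(R ∪ B) : Set Pt) b₁ b)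
    (hedge₂ : IsCCWHullEdge (↑(R ∪ B) : Set Pt) b b₂) :
    ∃ r₁ rk : Pt, r₁ ∈ R ∧ rk ∈ R ∧
      sgn3 b rk r₁ * sgn3 b rk b₂ ≤ 0 ∧
      sgn3 b r₁ rk * sgn3 b r₁ b₁ ≤ 0 ∧
      (((R ∪ B).erase b).filter (fun x =>
          sgn3 b r₁ x * sgn3 b r₁ b₁ ≤ 0 ∧ sgn3 b rk x * sgn3 b rk b₂ ≤ 0)).card = k ∧
      ((R ∪ B).erase b).filter (fun x =>
          sgn3 b r₁ x * sgn3 b r₁ b₁ ≤ 0 ∧ sgn3 b rk x * sgn3 b rk b₂ ≤ 0) ⊆ R ∧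
      (R.filter (fun x => 0 ≤ sgn3 b r₁ x * sgn3 b r₁ b₁)).card
        = k' * ((B.erase b).filter (fun x => 0 ≤ sgn3 b r₁ x * sgn3 b r₁ b₁)).card + 1 ∧
      (R.filter (fun x => 0 ≤ sgn3 b rk x * sgn3 b rk b₂)).card
        = k' * ((B.erase b).filter (fun x => 0 ≤ sgn3 b rk x * sgn3 b rk b₂)).card + 1 := by
  classical
  have hbRB : b ∈ R ∪ B := Finset.mem_union_right _ hb
  have hb₁RB : b₁ ∈ R ∪ B := Finset.mem_union_right _ hb₁
  have hb₂RB : b₂ ∈ R ∪ B := Finset.mem_union_right _ hb₂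
  have hb₁b : b₁ ≠ b := hedge₁.2.2.1
  have hbb₂ : b ≠ b₂ := hedge₂.2.2.1
  have hbnR : b ∉ R := fun h => (Finset.disjoint_left.1 hdisj) h hb
  -- cross of distinct points around b is nonzero
  have hcr : ∀ x ∈ R ∪ B, ∀ y ∈ R ∪ B, x ≠ b → y ≠ b → x ≠ y →
      cross (x - b) (y - b) ≠ 0 := by
    intro x hx y hy hxb hyb hxy hc
    exact hgp b (Finset.mem_coe.2 hbRB) x (Finset.mem_coe.2 hx) y (Finset.mem_coe.2 hy)
      (Ne.symm hxb) (Ne.symm hyb) hxy (collinear_of_cross_eq_zero' hc)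
  -- cone conditions
  have hConeU : ∀ x ∈ R ∪ B, cross (b₁ - b) (x - b) ≤ 0 := by
    intro x hx
    have h1 := hedge₁.2.2.2 x (Finset.mem_coe.2 hx)
    have h2 := cross_shift' b₁ b x
    have h3 : sgn3 b₁ b x = cross (b - b₁) (x - b₁) := rfl
    linarith [h1, h2, h3 ▸ h1]
  have hConeV : ∀ x ∈ R ∪ B, 0 ≤ cross (b₂ - b) (x - b) := by
    intro x hx
    exact hedge₂.2.2.2 x (Finset.mem_coe.2 hx)
  have hRne : R.Nonempty := Finset.card_pos.1 (by omega)
  have hb₁b₂ : b₁ ≠ b₂ := by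
    intro h
    obtain ⟨r, hr⟩ := hRne
    have hrRB : r ∈ R ∪ B := Finset.mem_union_left _ hr
    have hrb : r ≠ b := fun hh => hbnR (hh ▸ hr)
    have hrb₁ : b₁ ≠ r := fun hh => (Finset.disjoint_left.1 hdisj) (hh ▸ hr) hb₁
    have h1 := hConeU r hrRB
    have h2 := hConeV r hrRB
    rw [← h] at h2
    exact hcr b₁ hb₁RB r hrRB hb₁b hrb hrb₁ (le_antisymm h1 h2)
  have huv : cross (b₁ - b) (b₂ - b) < 0 :=
    lt_of_le_of_ne (hConeU b₂ hb₂RB) (hcr b₁ hb₁RB b₂ hb₂RB hb₁b (Ne.symm hbb₂) hb₁b₂)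
  -- the punctured set
  have hSeq : (R ∪ B).erase b = R ∪ B.erase b := by
    ext x
    simp only [Finset.mem_erase, Finset.mem_union]
    constructor
    · rintro ⟨hxb, hx | hx⟩
      · exact Or.inl hx
      · exact Or.inr ⟨hxb, hx⟩
    · rintro (hx | ⟨hxb, hx⟩)
      · exact ⟨fun hh => hbnR (hh ▸ hx), Or.inl hx⟩
      · exact ⟨hxb, Or.inr hx⟩
  have hb₁S : b₁ ∈ (R ∪ B).erase b := Finset.mem_erase.2 ⟨hb₁b, hb₁RB⟩
  have hb₂S : b₂ ∈ (R ∪ B).erase b := Finset.mem_erase.2 ⟨Ne.symm hbb₂, hb₂RB⟩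
  have hRS : R ⊆ (R ∪ B).erase b := by
    rw [hSeq]; exact Finset.subset_union_left
  have hBS : B.erase b ⊆ (R ∪ B).erase b := by
    rw [hSeq]; exact Finset.subset_union_right
  -- denominator negativity
  have hD : ∀ x ∈ (R ∪ B).erase b,
      cross (b₁ - b) (x - b) + cross (x - b) (b₂ - b) < 0 := by
    intro x hx
    obtain ⟨hxb, hxRB⟩ := Finset.mem_erase.1 hx
    have h1 := hConeU x hxRB
    have h2 := hConeV x hxRB
    have h2' : cross (x - b) (b₂ - b) ≤ 0 := by rw [cross_comm']; linarith
    rcases lt_or_eq_of_le (add_nonpos h1 h2') with h | h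
    · exact h
    have hz1 : cross (b₁ - b) (x - b) = 0 := by linarith
    have hz2 : cross (x - b) (b₂ - b) = 0 := by linarith
    have hx1 : x = b₁ := by
      by_contra hne
      exact hcr b₁ hb₁RB x hxRB hb₁b hxb (fun hh => hne hh.symm) hz1
    have hx2 : x = b₂ := by
      by_contra hne
      exact hcr x hxRB b₂ hb₂RB hxb (Ne.symm hbb₂) hne hz2
    exact absurd (hx1 ▸ hx2) hb₁b₂
  -- the radial key
  set f : Pt → ℝ := fun x =>
    cross (b₁ - b) (x - b) / (cross (b₁ - b) (x - b) + cross (x - b) (b₂ - b)) with hf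
  have hkey : ∀ x ∈ (R ∪ B).erase b, ∀ y ∈ (R ∪ B).erase b,
      (f x ≤ f y ↔ cross (x - b) (y - b) ≤ 0) := by
    intro x hx y hy
    have hDx := hD x hx
    have hDy := hD y hy
    have hid := plucker' (b₁ - b) (b₂ - b) (x - b) (y - b)
    rw [hf]
    simp only
    rw [show cross (b₁ - b) (x - b) / (cross (b₁ - b) (x - b) + cross (x - b) (b₂ - b))
        = (-cross (b₁ - b) (x - b)) / (-(cross (b₁ - b) (x - b) + cross (x - b) (b₂ - b)))
        from (neg_div_neg_eq _ _).symm,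
      show cross (b₁ - b) (y - b) / (cross (b₁ - b) (y - b) + cross (y - b) (b₂ - b))
        = (-cross (b₁ - b) (y - b)) / (-(cross (b₁ - b) (y - b) + cross (y - b) (b₂ - b)))
        from (neg_div_neg_eq _ _).symm,
      div_le_div_iff₀ (by linarith) (by linarith)]
    constructor
    · intro h
      by_contra hX
      push_neg at hX
      nlinarith [mul_pos (neg_pos.2 huv) hX]
    · intro h
      nlinarith [mul_nonneg (neg_nonneg.2 huv.le) (neg_nonneg.2 h)]
  have hinj : ∀ x ∈ (R ∪ B).erase b, ∀ y ∈ (R ∪ B).erase b, f x = f y → x = y := by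
    intro x hx y hy hxy
    by_contra hne
    obtain ⟨hxb, hxRB⟩ := Finset.mem_erase.1 hx
    obtain ⟨hyb, hyRB⟩ := Finset.mem_erase.1 hy
    have h1 : cross (x - b) (y - b) ≤ 0 := (hkey x hx y hy).1 hxy.le
    have h2 : cross (y - b) (x - b) ≤ 0 := (hkey y hy x hx).1 hxy.ge
    have : cross (x - b) (y - b) = 0 := by
      rw [cross_comm'] at h2; linarith
    exact hcr x hxRB y hyRB hxb hyb hne this
  have hkeylt : ∀ x ∈ (R ∪ B).erase b, ∀ y ∈ (R ∪ B).erase b,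
      (f x < f y ↔ cross (x - b) (y - b) < 0) := by
    intro x hx y hy
    constructor
    · intro h
      rcases lt_or_eq_of_le ((hkey x hx y hy).1 h.le) with h' | h'
      · exact h'
      · exfalso
        rcases eq_or_ne x y with rfl | hne
        · exact lt_irrefl _ h
        · exact hcr x (Finset.mem_erase.1 hx).2 y (Finset.mem_erase.1 hy).2
            (Finset.mem_erase.1 hx).1 (Finset.mem_erase.1 hy).1 hne h'
    · intro h
      rcases lt_or_eq_of_le ((hkey x hx y hy).2 h.le) with h' | h'
      · exact h'
      · exfalso
        have := hinj x hx y hy h'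
        subst this
        have hz : cross (x - b) (x - b) = 0 := by simp [cross]; ring
        linarith
  -- strict min and max
  have hminb₁ : ∀ x ∈ (R ∪ B).erase b, x ≠ b₁ → f b₁ < f x := by
    intro x hx hne
    obtain ⟨hxb, hxRB⟩ := Finset.mem_erase.1 hx
    exact (hkeylt b₁ hb₁S x hx).2
      (lt_of_le_of_ne (hConeU x hxRB) (hcr b₁ hb₁RB x hxRB hb₁b hxb (fun hh => hne hh.symm)))
  have hmaxb₂ : ∀ x ∈ (R ∪ B).erase b, x ≠ b₂ → f x < f b₂ := by
    intro x hx hne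
    obtain ⟨hxb, hxRB⟩ := Finset.mem_erase.1 hx
    apply (hkeylt x hx b₂ hb₂S).2
    have h1 := hConeV x hxRB
    have h2 := cross_comm' (x - b) (b₂ - b)
    have h3 : cross (x - b) (b₂ - b) ≤ 0 := by linarith
    exact lt_of_le_of_ne h3 (hcr x hxRB b₂ hb₂RB hxb (Ne.symm hbb₂) hne)
  -- prefix-splitting of counts
  have hsplit : ∀ (A : Finset Pt) (p t : Pt), f p ≤ f t →
      (A.filter (fun x => f x ≤ f t)).card
        = (A.filter (fun x => f x ≤ f p)).card
          + (A.filter (fun x => f p < f x ∧ f x ≤ f t)).card := by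
    intro A p t hpt
    have heq : A.filter (fun x => f x ≤ f t)
        = A.filter (fun x => f x ≤ f p) ∪ A.filter (fun x => f p < f x ∧ f x ≤ f t) := by
      ext x
      simp only [Finset.mem_filter, Finset.mem_union]
      constructor
      · rintro ⟨hxA, hxt⟩
        rcases le_or_gt (f x) (f p) with h | h
        · exact Or.inl ⟨hxA, h⟩
        · exact Or.inr ⟨hxA, h, hxt⟩
      · rintro (⟨hxA, h⟩ | ⟨hxA, h1, h2⟩)
        · exact ⟨hxA, le_trans h hpt⟩
        · exact ⟨hxA, h2⟩
    rw [heq, Finset.card_union_of_disjoint]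
    rw [Finset.disjoint_left]
    intro a ha hb'
    simp only [Finset.mem_filter] at ha hb'
    linarith [ha.2, hb'.2.1]
  have hRBdisj' : Disjoint R (B.erase b) := hdisj.mono_right (Finset.erase_subset _ _)
  have hScard : ∀ (pred : Pt → Prop) [DecidablePred pred],
      (((R ∪ B).erase b).filter pred).card
        = (R.filter pred).card + ((B.erase b).filter pred).card := by
    intro pred inst
    rw [hSeq, Finset.filter_union, Finset.card_union_of_disjoint
      (Finset.disjoint_filter_filter hRBdisj')]
  -- the last place with a nonpositive discrepancy
  have hTne : (((R ∪ B).erase b).filter (fun t =>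
      (R.filter (fun x => f x ≤ f t)).card
        ≤ k' * ((B.erase b).filter (fun x => f x ≤ f t)).card)).Nonempty := by
    refine ⟨b₁, Finset.mem_filter.2 ⟨hb₁S, ?_⟩⟩
    have hcRb₁ : (R.filter (fun x => f x ≤ f b₁)).card = 0 := by
      rw [Finset.card_eq_zero, Finset.filter_eq_empty_iff]
      intro x hxR
      have hxb₁ : x ≠ b₁ := fun hh => (Finset.disjoint_left.1 hdisj) hxR (hh ▸ hb₁)
      exact not_le.2 (hminb₁ x (hRS hxR) hxb₁)
    rw [hcRb₁]
    exact Nat.zero_le _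
  obtain ⟨p₀, hp₀T, hp₀max⟩ := Finset.exists_max_image _ f hTne
  have hp₀S : p₀ ∈ (R ∪ B).erase b := (Finset.mem_filter.1 hp₀T).1
  have hGp₀ : (R.filter (fun x => f x ≤ f p₀)).card
      ≤ k' * ((B.erase b).filter (fun x => f x ≤ f p₀)).card := (Finset.mem_filter.1 hp₀T).2
  have hafter : ∀ t ∈ (R ∪ B).erase b, f p₀ < f t →
      k' * ((B.erase b).filter (fun x => f x ≤ f t)).card + 1
        ≤ (R.filter (fun x => f x ≤ f t)).card := by
    intro t ht hlt
    by_contra hle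
    push_neg at hle
    have hmem : t ∈ ((R ∪ B).erase b).filter (fun t =>
        (R.filter (fun x => f x ≤ f t)).card
          ≤ k' * ((B.erase b).filter (fun x => f x ≤ f t)).card) :=
      Finset.mem_filter.2 ⟨ht, by linarith⟩
    exact absurd (hp₀max t hmem) (not_le.2 hlt)
  -- counts at b₂
  have hcRb₂ : (R.filter (fun x => f x ≤ f b₂)).card = R.card := by
    rw [Finset.filter_true_of_mem]
    intro x hxR
    rcases eq_or_ne x b₂ with rfl | hne
    · exact le_refl _
    · exact (hmaxb₂ x (hRS hxR) hne).le
  have hcBb₂ : ((B.erase b).filter (fun x => f x ≤ f b₂)).card = (B.erase b).card := by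
    rw [Finset.filter_true_of_mem]
    intro x hxB
    rcases eq_or_ne x b₂ with rfl | hne
    · exact le_refl _
    · exact (hmaxb₂ x (hBS hxB) hne).le
  have hBec : (B.erase b).card + 1 = B.card := Finset.card_erase_add_one hb
  have hGb₂ : (R.filter (fun x => f x ≤ f b₂)).card
      = k' * ((B.erase b).filter (fun x => f x ≤ f b₂)).card + k := by
    rw [hcRb₂, hcBb₂, hcard, ← hBec, hkk]
    ring
  -- p₀ is not b₂, so the window after p₀ is nonempty
  have hp₀b₂ : p₀ ≠ b₂ := by
    intro hh
    rw [hh] at hGp₀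
    rw [hGb₂] at hGp₀
    have h1 : 1 ≤ k := by omega
    linarith
  have hp₀b₂lt : f p₀ < f b₂ := hmaxb₂ p₀ hp₀S hp₀b₂
  have hWne : (((R ∪ B).erase b).filter (fun x => f p₀ < f x)).Nonempty :=
    ⟨b₂, Finset.mem_filter.2 ⟨hb₂S, hp₀b₂lt⟩⟩
  obtain ⟨r₁, hr₁W, hr₁min⟩ := Finset.exists_min_image _ f hWne
  have hr₁S : r₁ ∈ (R ∪ B).erase b := (Finset.mem_filter.1 hr₁W).1
  have hp₀r₁ : f p₀ < f r₁ := (Finset.mem_filter.1 hr₁W).2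
  -- the interval (p₀, r₁] contains only r₁
  have hIr₁ : ((R ∪ B).erase b).filter (fun x => f p₀ < f x ∧ f x ≤ f r₁) = {r₁} := by
    ext x
    simp only [Finset.mem_filter, Finset.mem_singleton]
    constructor
    · rintro ⟨hxS, h1, h2⟩
      exact hinj x hxS r₁ hr₁S (le_antisymm h2 (hr₁min x (Finset.mem_filter.2 ⟨hxS, h1⟩)))
    · rintro rfl
      exact ⟨hr₁S, hp₀r₁, le_refl _⟩
  have hsum1 : (R.filter (fun x => f p₀ < f x ∧ f x ≤ f r₁)).card
      + ((B.erase b).filter (fun x => f p₀ < f x ∧ f x ≤ f r₁)).card = 1 := by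
    have h := hScard (fun x => f p₀ < f x ∧ f x ≤ f r₁)
    rw [hIr₁] at h
    simp only [Finset.card_singleton] at h
    omega
  have hsplR1 := hsplit R p₀ r₁ hp₀r₁.le
  have hsplB1 := hsplit (B.erase b) p₀ r₁ hp₀r₁.le
  have hGr₁ := hafter r₁ hr₁S hp₀r₁
  have hr₁R : r₁ ∈ R := by
    have hr₁RB' : r₁ ∈ R ∨ r₁ ∈ B.erase b := by
      have := hr₁S; rw [hSeq] at this; exact Finset.mem_union.1 this
    rcases hr₁RB' with h | h
    · exact h
    exfalso
    have hmem : r₁ ∈ (B.erase b).filter (fun x => f p₀ < f x ∧ f x ≤ f r₁) :=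
      Finset.mem_filter.2 ⟨h, hp₀r₁, le_refl _⟩
    have hb2ge : 1 ≤ ((B.erase b).filter (fun x => f p₀ < f x ∧ f x ≤ f r₁)).card :=
      Finset.card_pos.2 ⟨r₁, hmem⟩
    have ha0 : (R.filter (fun x => f p₀ < f x ∧ f x ≤ f r₁)).card = 0 := by omega
    have hb1 : ((B.erase b).filter (fun x => f p₀ < f x ∧ f x ≤ f r₁)).card = 1 := by omega
    rw [hsplR1, hsplB1, ha0, hb1] at hGr₁
    have hexp : k' * (((B.erase b).filter (fun x => f x ≤ f p₀)).card + 1)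
        = k' * ((B.erase b).filter (fun x => f x ≤ f p₀)).card + k' := by ring
    rw [hexp] at hGr₁
    linarith
  have hmemR1 : r₁ ∈ R.filter (fun x => f p₀ < f x ∧ f x ≤ f r₁) :=
    Finset.mem_filter.2 ⟨hr₁R, hp₀r₁, le_refl _⟩
  have ha1 : (R.filter (fun x => f p₀ < f x ∧ f x ≤ f r₁)).card = 1 := by
    have := Finset.card_pos.2 ⟨r₁, hmemR1⟩
    omega
  have hb0 : ((B.erase b).filter (fun x => f p₀ < f x ∧ f x ≤ f r₁)).card = 0 := by omega
  have hcRr₁ : (R.filter (fun x => f x ≤ f r₁)).card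
      = (R.filter (fun x => f x ≤ f p₀)).card + 1 := by rw [hsplR1, ha1]
  have hcBr₁ : ((B.erase b).filter (fun x => f x ≤ f r₁)).card
      = ((B.erase b).filter (fun x => f x ≤ f p₀)).card := by rw [hsplB1, hb0]; omega
  have hGp₀0 : (R.filter (fun x => f x ≤ f p₀)).card
      = k' * ((B.erase b).filter (fun x => f x ≤ f p₀)).card := by
    rw [hcRr₁, hcBr₁] at hGr₁
    exact Nat.le_antisymm hGp₀ (by linarith)
  have hGr₁1 : (R.filter (fun x => f x ≤ f r₁)).card
      = k' * ((B.erase b).filter (fun x => f x ≤ f r₁)).card + 1 := by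
    rw [hcRr₁, hcBr₁, hGp₀0]
  -- the window after p₀ has at least k points
  have hsplRb₂ := hsplit R p₀ b₂ hp₀b₂lt.le
  have hWbig : k ≤ (R.filter (fun x => f p₀ < f x ∧ f x ≤ f b₂)).card := by
    rw [hGb₂, hGp₀0] at hsplRb₂
    have hmono : ((B.erase b).filter (fun x => f x ≤ f p₀)).card
        ≤ ((B.erase b).filter (fun x => f x ≤ f b₂)).card := by
      apply Finset.card_le_card
      intro x hx
      obtain ⟨hxB, hxle⟩ := Finset.mem_filter.1 hx
      exact Finset.mem_filter.2 ⟨hxB, le_trans hxle hp₀b₂lt.le⟩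
    have hmul : k' * ((B.erase b).filter (fun x => f x ≤ f p₀)).card
        ≤ k' * ((B.erase b).filter (fun x => f x ≤ f b₂)).card :=
      Nat.mul_le_mul_left _ hmono
    linarith
  have hWcard : k ≤ (((R ∪ B).erase b).filter (fun x => f p₀ < f x)).card := by
    refine le_trans hWbig (Finset.card_le_card ?_)
    intro x hx
    obtain ⟨hxR, hx1, _⟩ := Finset.mem_filter.1 hx
    exact Finset.mem_filter.2 ⟨hRS hxR, hx1⟩
  -- choose rk : the last point whose window-prefix has at most k elements
  have hr₁Wk : r₁ ∈ (((R ∪ B).erase b).filter (fun x => f p₀ < f x)).filter (fun t =>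
      ((((R ∪ B).erase b).filter (fun x => f p₀ < f x)).filter
        (fun x => f x ≤ f t)).card ≤ k) := by
    refine Finset.mem_filter.2 ⟨hr₁W, ?_⟩
    have heq : (((R ∪ B).erase b).filter (fun x => f p₀ < f x)).filter
        (fun x => f x ≤ f r₁) = {r₁} := by
      rw [Finset.filter_filter]
      exact hIr₁
    rw [heq, Finset.card_singleton]
    omega
  obtain ⟨rk, hrkWk, hrkmax⟩ := Finset.exists_max_image _ f ⟨r₁, hr₁Wk⟩
  have hrkW : rk ∈ ((R ∪ B).erase b).filter (fun x => f p₀ < f x) :=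
    (Finset.mem_filter.1 hrkWk).1
  have hrkS : rk ∈ (R ∪ B).erase b := (Finset.mem_filter.1 hrkW).1
  have hp₀rk : f p₀ < f rk := (Finset.mem_filter.1 hrkW).2
  have hr₁rk : f r₁ ≤ f rk := hr₁min rk hrkW
  have hc_le : ((((R ∪ B).erase b).filter (fun x => f p₀ < f x)).filter
      (fun x => f x ≤ f rk)).card ≤ k := (Finset.mem_filter.1 hrkWk).2
  have hck : ((((R ∪ B).erase b).filter (fun x => f p₀ < f x)).filter
      (fun x => f x ≤ f rk)).card = k := by
    by_contra hne
    have hlt : ((((R ∪ B).erase b).filter (fun x => f p₀ < f x)).filter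
        (fun x => f x ≤ f rk)).card < k := lt_of_le_of_ne hc_le hne
    have hWcne : ((((R ∪ B).erase b).filter (fun x => f p₀ < f x)).filter
        (fun x => ¬ f x ≤ f rk)).Nonempty := by
      rw [← Finset.card_pos]
      have := Finset.card_filter_add_card_filter_not
        (s := ((R ∪ B).erase b).filter (fun x => f p₀ < f x)) (p := fun x => f x ≤ f rk)
      omega
    obtain ⟨s, hsW', hsmin⟩ := Finset.exists_min_image _ f hWcne
    have hsW : s ∈ ((R ∪ B).erase b).filter (fun x => f p₀ < f x) :=
      (Finset.mem_filter.1 hsW').1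
    have hsgt : f rk < f s := not_le.1 (Finset.mem_filter.1 hsW').2
    have hseq : (((R ∪ B).erase b).filter (fun x => f p₀ < f x)).filter (fun x => f x ≤ f s)
        = insert s ((((R ∪ B).erase b).filter (fun x => f p₀ < f x)).filter
            (fun x => f x ≤ f rk)) := by
      ext x
      simp only [Finset.mem_filter, Finset.mem_insert]
      constructor
      · rintro ⟨hxW, hxs⟩
        rcases le_or_gt (f x) (f rk) with h | h
        · exact Or.inr ⟨hxW, h⟩
        · left
          exact hinj x hxW.1 s (Finset.mem_filter.1 hsW).1
            (le_antisymm hxs (hsmin x (Finset.mem_filter.2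
              ⟨Finset.mem_filter.2 hxW, not_le.2 h⟩)))
      · rintro (rfl | ⟨hxW, h⟩)
        · exact ⟨Finset.mem_filter.1 hsW, le_refl _⟩
        · exact ⟨hxW, le_trans h hsgt.le⟩
    have hsns : s ∉ (((R ∪ B).erase b).filter (fun x => f p₀ < f x)).filter
        (fun x => f x ≤ f rk) := by
      simp only [Finset.mem_filter]
      rintro ⟨_, h⟩
      exact absurd h (not_le.2 hsgt)
    have hmem : s ∈ (((R ∪ B).erase b).filter (fun x => f p₀ < f x)).filter (fun t =>
        ((((R ∪ B).erase b).filter (fun x => f p₀ < f x)).filter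
          (fun x => f x ≤ f t)).card ≤ k) := by
      refine Finset.mem_filter.2 ⟨hsW, ?_⟩
      rw [hseq, Finset.card_insert_of_notMem hsns]
      omega
    exact absurd (hrkmax s hmem) (not_le.2 hsgt)
  -- every point of the window up to rk is red
  have hVred : ∀ t ∈ (((R ∪ B).erase b).filter (fun x => f p₀ < f x)).filter
      (fun x => f x ≤ f rk), t ∈ R := by
    intro t ht
    obtain ⟨htW, htrk⟩ := Finset.mem_filter.1 ht
    have htS : t ∈ (R ∪ B).erase b := (Finset.mem_filter.1 htW).1
    have hp₀t : f p₀ < f t := (Finset.mem_filter.1 htW).2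
    have htRB' : t ∈ R ∨ t ∈ B.erase b := by
      have := htS; rw [hSeq] at this; exact Finset.mem_union.1 this
    rcases htRB' with h | h
    · exact h
    exfalso
    have hsum : (R.filter (fun x => f p₀ < f x ∧ f x ≤ f t)).card
        + ((B.erase b).filter (fun x => f p₀ < f x ∧ f x ≤ f t)).card
        = (((R ∪ B).erase b).filter (fun x => f p₀ < f x ∧ f x ≤ f t)).card :=
      (hScard (fun x => f p₀ < f x ∧ f x ≤ f t)).symm
    have hsub2 : ((R ∪ B).erase b).filter (fun x => f p₀ < f x ∧ f x ≤ f t)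
        ⊆ (((R ∪ B).erase b).filter (fun x => f p₀ < f x)).filter (fun x => f x ≤ f rk) := by
      intro x hx
      obtain ⟨hxS, hx1, hx2⟩ := Finset.mem_filter.1 hx
      exact Finset.mem_filter.2 ⟨Finset.mem_filter.2 ⟨hxS, hx1⟩, le_trans hx2 htrk⟩
    have hcle := Finset.card_le_card hsub2
    rw [hck] at hcle
    have hmemt : t ∈ (B.erase b).filter (fun x => f p₀ < f x ∧ f x ≤ f t) :=
      Finset.mem_filter.2 ⟨h, hp₀t, le_refl _⟩
    have hb2ge : 1 ≤ ((B.erase b).filter (fun x => f p₀ < f x ∧ f x ≤ f t)).card :=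
      Finset.card_pos.2 ⟨t, hmemt⟩
    have hGt := hafter t htS hp₀t
    rw [hsplit R p₀ t hp₀t.le, hsplit (B.erase b) p₀ t hp₀t.le, hGp₀0] at hGt
    have hexp : k' * (((B.erase b).filter (fun x => f x ≤ f p₀)).card
        + ((B.erase b).filter (fun x => f p₀ < f x ∧ f x ≤ f t)).card)
        = k' * ((B.erase b).filter (fun x => f x ≤ f p₀)).card
          + k' * ((B.erase b).filter (fun x => f p₀ < f x ∧ f x ≤ f t)).card := by ring
    rw [hexp] at hGt
    have hk'b : k' ≤ k' * ((B.erase b).filter (fun x => f p₀ < f x ∧ f x ≤ f t)).card :=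
      Nat.le_mul_of_pos_right _ (by omega)
    linarith
  have hrkR : rk ∈ R := hVred rk (Finset.mem_filter.2 ⟨hrkW, le_refl _⟩)
  -- counts at rk
  have hVfil : ((R ∪ B).erase b).filter (fun x => f p₀ < f x ∧ f x ≤ f rk)
      = (((R ∪ B).erase b).filter (fun x => f p₀ < f x)).filter (fun x => f x ≤ f rk) := by
    rw [Finset.filter_filter]
  have hRfil : R.filter (fun x => f p₀ < f x ∧ f x ≤ f rk)
      = ((R ∪ B).erase b).filter (fun x => f p₀ < f x ∧ f x ≤ f rk) := by
    ext x
    simp only [Finset.mem_filter]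
    constructor
    · rintro ⟨hxR, hx⟩
      exact ⟨hRS hxR, hx⟩
    · rintro ⟨hxS, hx1, hx2⟩
      refine ⟨hVred x ?_, hx1, hx2⟩
      rw [← hVfil]
      exact Finset.mem_filter.2 ⟨hxS, hx1, hx2⟩
  have hBfil : (B.erase b).filter (fun x => f p₀ < f x ∧ f x ≤ f rk) = ∅ := by
    rw [Finset.filter_eq_empty_iff]
    intro x hxB hx
    have hxR : x ∈ R := by
      apply hVred x
      rw [← hVfil]
      exact Finset.mem_filter.2 ⟨hBS hxB, hx⟩
    exact (Finset.disjoint_left.1 hRBdisj') hxR hxB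
  have hcRrk : (R.filter (fun x => f x ≤ f rk)).card
      = (R.filter (fun x => f x ≤ f p₀)).card + k := by
    rw [hsplit R p₀ rk hp₀rk.le, hRfil, hVfil, hck]
  have hcBrk : ((B.erase b).filter (fun x => f x ≤ f rk)).card
      = ((B.erase b).filter (fun x => f x ≤ f p₀)).card := by
    rw [hsplit (B.erase b) p₀ rk hp₀rk.le, hBfil, Finset.card_empty]
    omega
  -- suffix counts at rk
  have hfrk_ne : ∀ x ∈ (R ∪ B).erase b, x ≠ rk → f x ≠ f rk :=
    fun x hx hne heq => hne (hinj x hx rk hrkS heq)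
  have hsufR : (R.filter (fun x => f rk ≤ f x)).card
      + (R.filter (fun x => f x ≤ f rk)).card = R.card + 1 := by
    have h1 : R.filter (fun x => f rk ≤ f x)
        = insert rk (R.filter (fun x => ¬ f x ≤ f rk)) := by
      ext x
      simp only [Finset.mem_filter, Finset.mem_insert]
      constructor
      · rintro ⟨hxR, hge⟩
        rcases eq_or_ne x rk with rfl | hne
        · exact Or.inl rfl
        · exact Or.inr ⟨hxR, fun hle => hfrk_ne x (hRS hxR) hne (le_antisymm hle hge)⟩
      · rintro (rfl | ⟨hxR, hnle⟩)
        · exact ⟨hrkR, le_refl _⟩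
        · exact ⟨hxR, (not_le.1 hnle).le⟩
    have h2 : rk ∉ R.filter (fun x => ¬ f x ≤ f rk) := by
      simp only [Finset.mem_filter]
      rintro ⟨_, h⟩
      exact h (le_refl _)
    have h3 := Finset.card_filter_add_card_filter_not
      (s := R) (p := fun x => f x ≤ f rk)
    rw [h1, Finset.card_insert_of_notMem h2]
    omega
  have hsufB : ((B.erase b).filter (fun x => f rk ≤ f x)).card
      + ((B.erase b).filter (fun x => f x ≤ f rk)).card = (B.erase b).card := by
    have h1 : (B.erase b).filter (fun x => f rk ≤ f x)
        = (B.erase b).filter (fun x => ¬ f x ≤ f rk) := by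
      ext x
      simp only [Finset.mem_filter]
      constructor
      · rintro ⟨hxB, hge⟩
        have hne : x ≠ rk := fun hh => (Finset.disjoint_left.1 hRBdisj') (hh ▸ hrkR) hxB
        exact ⟨hxB, fun hle => hfrk_ne x (hBS hxB) hne (le_antisymm hle hge)⟩
      · rintro ⟨hxB, hnle⟩
        exact ⟨hxB, (not_le.1 hnle).le⟩
    have h3 := Finset.card_filter_add_card_filter_not
      (s := B.erase b) (p := fun x => f x ≤ f rk)
    rw [h1]
    omega
  have hGrk2 : (R.filter (fun x => f rk ≤ f x)).card
      = k' * ((B.erase b).filter (fun x => f rk ≤ f x)).card + 1 := by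
    have hsB : ((B.erase b).filter (fun x => f rk ≤ f x)).card
        + ((B.erase b).filter (fun x => f x ≤ f p₀)).card = (B.erase b).card := by omega
    have hm1 : k' * ((B.erase b).filter (fun x => f rk ≤ f x)).card
        + k' * ((B.erase b).filter (fun x => f x ≤ f p₀)).card
        = k' * (B.erase b).card := by
      rw [← Nat.mul_add, hsB]
    have hm2 : k' * B.card = k' * (B.erase b).card + k' := by
      rw [← hBec]; ring
    have hR1 : (R.filter (fun x => f rk ≤ f x)).card
        + k' * ((B.erase b).filter (fun x => f x ≤ f p₀)).card + k = R.card + 1 := by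
      rw [← hGp₀0]; omega
    linarith [hcard, hkk, hR1, hm1, hm2]
  -- sign facts
  have hr₁b₁ : r₁ ≠ b₁ := fun hh => (Finset.disjoint_left.1 hdisj) hr₁R (hh ▸ hb₁)
  have hrkb₂ : rk ≠ b₂ := fun hh => (Finset.disjoint_left.1 hdisj) hrkR (hh ▸ hb₂)
  have hpos : 0 < sgn3 b r₁ b₁ := by
    have h := (hkeylt b₁ hb₁S r₁ hr₁S).1 (hminb₁ r₁ hr₁S hr₁b₁)
    have h2 := cross_comm' (b₁ - b) (r₁ - b)
    show 0 < cross (r₁ - b) (b₁ - b)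
    linarith
  have hneg : sgn3 b rk b₂ < 0 := by
    have h := (hkeylt rk hrkS b₂ hb₂S).1 (hmaxb₂ rk hrkS hrkb₂)
    show cross (rk - b) (b₂ - b) < 0
    exact h
  have hiff1 : ∀ x ∈ (R ∪ B).erase b,
      (sgn3 b r₁ x * sgn3 b r₁ b₁ ≤ 0 ↔ f r₁ ≤ f x) := by
    intro x hx
    rw [mul_nonpos_iff_of_pos_right' hpos]
    exact Iff.symm (hkey r₁ hr₁S x hx)
  have hiff2 : ∀ x ∈ (R ∪ B).erase b,
      (sgn3 b rk x * sgn3 b rk b₂ ≤ 0 ↔ f x ≤ f rk) := by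
    intro x hx
    rw [mul_nonpos_iff_of_neg_right' hneg]
    have hk1 := hkey x hx rk hrkS
    have hc := cross_comm' (x - b) (rk - b)
    constructor
    · intro h
      apply hk1.2
      have h' : (0:ℝ) ≤ cross (rk - b) (x - b) := h
      linarith
    · intro h
      have h' := hk1.1 h
      show (0:ℝ) ≤ cross (rk - b) (x - b)
      linarith
  have hiff3 : ∀ x ∈ (R ∪ B).erase b,
      (0 ≤ sgn3 b r₁ x * sgn3 b r₁ b₁ ↔ f x ≤ f r₁) := by
    intro x hx
    rw [mul_nonneg_iff_of_pos_right'' hpos]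
    have hk1 := hkey x hx r₁ hr₁S
    have hc := cross_comm' (x - b) (r₁ - b)
    constructor
    · intro h
      apply hk1.2
      have h' : (0:ℝ) ≤ cross (r₁ - b) (x - b) := h
      linarith
    · intro h
      have h' := hk1.1 h
      show (0:ℝ) ≤ cross (r₁ - b) (x - b)
      linarith
  have hiff4 : ∀ x ∈ (R ∪ B).erase b,
      (0 ≤ sgn3 b rk x * sgn3 b rk b₂ ↔ f rk ≤ f x) := by
    intro x hx
    rw [mul_nonneg_iff_of_neg_right' hneg]
    exact Iff.symm (hkey rk hrkS x hx)
  -- the wedge is exactly the window up to rk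
  have hwedge : ((R ∪ B).erase b).filter (fun x =>
      sgn3 b r₁ x * sgn3 b r₁ b₁ ≤ 0 ∧ sgn3 b rk x * sgn3 b rk b₂ ≤ 0)
      = (((R ∪ B).erase b).filter (fun x => f p₀ < f x)).filter (fun x => f x ≤ f rk) := by
    ext x
    constructor
    · intro hx
      obtain ⟨hxS, h1, h2⟩ := Finset.mem_filter.1 hx
      have hge : f r₁ ≤ f x := (hiff1 x hxS).1 h1
      have hle : f x ≤ f rk := (hiff2 x hxS).1 h2
      exact Finset.mem_filter.2 ⟨Finset.mem_filter.2 ⟨hxS, lt_of_lt_of_le hp₀r₁ hge⟩, hle⟩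
    · intro hx
      obtain ⟨hxW, hle⟩ := Finset.mem_filter.1 hx
      have hxS := (Finset.mem_filter.1 hxW).1
      have hge : f r₁ ≤ f x := hr₁min x hxW
      exact Finset.mem_filter.2 ⟨hxS, (hiff1 x hxS).2 hge, (hiff2 x hxS).2 hle⟩
  refine ⟨r₁, rk, hr₁R, hrkR, ?_, ?_, ?_, ?_, ?_, ?_⟩
  · have h1 : (0:ℝ) ≤ sgn3 b rk r₁ := by
      have h := (hkey r₁ hr₁S rk hrkS).1 hr₁rk
      have hc := cross_comm' (r₁ - b) (rk - b)
      show (0:ℝ) ≤ cross (rk - b) (r₁ - b)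
      linarith
    exact mul_nonpos_of_nonneg_of_nonpos h1 hneg.le
  · have h1 : sgn3 b r₁ rk ≤ 0 := (hkey r₁ hr₁S rk hrkS).1 hr₁rk
    exact mul_nonpos_of_nonpos_of_nonneg h1 hpos.le
  · rw [hwedge]
    exact hck
  · rw [hwedge]
    intro x hx
    exact hVred x hx
  · have e1 : R.filter (fun x => 0 ≤ sgn3 b r₁ x * sgn3 b r₁ b₁)
        = R.filter (fun x => f x ≤ f r₁) := by
      ext x
      simp only [Finset.mem_filter]
      constructor
      · rintro ⟨hxR, h⟩
        exact ⟨hxR, (hiff3 x (hRS hxR)).1 h⟩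
      · rintro ⟨hxR, h⟩
        exact ⟨hxR, (hiff3 x (hRS hxR)).2 h⟩
    have e2 : (B.erase b).filter (fun x => 0 ≤ sgn3 b r₁ x * sgn3 b r₁ b₁)
        = (B.erase b).filter (fun x => f x ≤ f r₁) := by
      ext x
      simp only [Finset.mem_filter]
      constructor
      · rintro ⟨hxB, h⟩
        exact ⟨hxB, (hiff3 x (hBS hxB)).1 h⟩
      · rintro ⟨hxB, h⟩
        exact ⟨hxB, (hiff3 x (hBS hxB)).2 h⟩
    rw [e1, e2]
    exact hGr₁1
  · have e1 : R.filter (fun x => 0 ≤ sgn3 b rk x * sgn3 b rk b₂)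
        = R.filter (fun x => f rk ≤ f x) := by
      ext x
      simp only [Finset.mem_filter]
      constructor
      · rintro ⟨hxR, h⟩
        exact ⟨hxR, (hiff4 x (hRS hxR)).1 h⟩
      · rintro ⟨hxR, h⟩
        exact ⟨hxR, (hiff4 x (hRS hxR)).2 h⟩
    have e2 : (B.erase b).filter (fun x => 0 ≤ sgn3 b rk x * sgn3 b rk b₂)
        = (B.erase b).filter (fun x => f rk ≤ f x) := by
      ext x
      simp only [Finset.mem_filter]
      constructor
      · rintro ⟨hxB, h⟩
        exact ⟨hxB, (hiff4 x (hBS hxB)).1 h⟩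
      · rintro ⟨hxB, h⟩
        exact ⟨hxB, (hiff4 x (hBS hxB)).2 h⟩
    rw [e1, e2]
    exact hGrk2
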